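/- The three-qubit NXOR state ψ_NXOR is strongly contextual for the measurements Y and Z at each party: there is no global assignment g : Fin 3 → M → Bool such that for every context c : Fin 3 → M, the induced outcome i ↦ g i (c i) has nonzero amplitude with respect to ψ_NXOR. -/

import Mathlib

noncomputable section

/-- Inner product of two `n`-qubit states `(Fin n → Bool) → ℂ`. -/
def inner' {n : ℕ} (φ ψ : (Fin n → Bool) → ℂ) : ℂ :=
  ∑ s : Fin n → Bool, (starRingEnd ℂ) (φ s) * ψ s

/-- Tensor product of local vectors. -/
def tensor {n : ℕ} (v : Fin n → Bool → ℂ) : (Fin n → Bool) → ℂ :=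
  fun s => ∏ i, v i (s i)

/-- `Y`-measurement eigenvectors: `yvec false = (1/√2, i/√2)`,
`yvec true = (1/√2, -i/√2)`. -/
def yvec (b : Bool) : Bool → ℂ :=
  fun b' => if b' then (if b then -Complex.I else Complex.I) * (Real.sqrt 2 : ℂ)⁻¹
    else (Real.sqrt 2 : ℂ)⁻¹

/-- `Z`-measurement eigenvectors. -/
def evec (b : Bool) : Bool → ℂ := fun b' => if b = b' then 1 else 0

/-- The measurement set: `Y` or `Z` at each site. -/
inductive M | Y | Z

/-- The eigenvector family of each measurement. -/
def mvec : M → Bool → Bool → ℂ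
  | M.Y => yvec
  | M.Z => evec

/-- The amplitude of outcome `o` in context `c` for a 3-qubit state `ψ`. -/
def amp (ψ : (Fin 3 → Bool) → ℂ) (c : Fin 3 → M) (o : Fin 3 → Bool) : ℂ :=
  inner' (tensor fun i => mvec (c i) (o i)) ψ

/-- A global assignment is consistent if its induced outcome is possible in
every context. -/
def consistent (ψ : (Fin 3 → Bool) → ℂ) (g : Fin 3 → M → Bool) : Prop :=
  ∀ c : Fin 3 → M, amp ψ c (fun i => g i (c i)) ≠ 0

/-- The three-qubit NXOR state. -/
def psiNXOR : (Fin 3 → Bool) → ℂ :=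
  fun s => if s 2 = !(Bool.xor (s 0) (s 1)) then (1/2 : ℂ) else 0


def boolTriple : (Bool × Bool × Bool) ≃ (Fin 3 → Bool) where
  toFun p := ![p.1, p.2.1, p.2.2]
  invFun s := (s 0, s 1, s 2)
  left_inv p := rfl
  right_inv s := by funext i; fin_cases i <;> rfl

lemma sum_pi3 (f : (Fin 3 → Bool) → ℂ) :
    ∑ s : Fin 3 → Bool, f s =
      f ![false,false,false] + f ![false,false,true] + f ![false,true,false] +
      f ![false,true,true] + f ![true,false,false] + f ![true,false,true] +
      f ![true,true,false] + f ![true,true,true] := by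
  rw [← boolTriple.sum_comp]
  simp [Fintype.sum_prod_type, boolTriple]
  dsimp only [DFunLike.coe, EquivLike.coe]
  ring

lemma ampYYZ (o0 o1 o2 : Bool) (h : xor o0 (xor o1 o2) = true) :
    amp psiNXOR ![M.Y, M.Y, M.Z] ![o0, o1, o2] = 0 := by
  rcases o0 <;> rcases o1 <;> rcases o2 <;> simp at h <;>
  · simp only [amp, inner', sum_pi3, tensor, Fin.prod_univ_three]
    norm_num [mvec, yvec, evec, psiNXOR, Matrix.cons_val_zero, Matrix.cons_val_one,
      Matrix.head_cons, Matrix.cons_val_two, Matrix.tail_cons]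
    try ring_nf
    try simp [Complex.I_sq]
    try ring

lemma ampYZY (o0 o1 o2 : Bool) (h : xor o0 (xor o1 o2) = true) :
    amp psiNXOR ![M.Y, M.Z, M.Y] ![o0, o1, o2] = 0 := by
  rcases o0 <;> rcases o1 <;> rcases o2 <;> simp at h <;>
  · simp only [amp, inner', sum_pi3, tensor, Fin.prod_univ_three]
    norm_num [mvec, yvec, evec, psiNXOR, Matrix.cons_val_zero, Matrix.cons_val_one,
      Matrix.head_cons, Matrix.cons_val_two, Matrix.tail_cons]
    try ring_nf
    try simp [Complex.I_sq]
    try ring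

lemma ampZYY (o0 o1 o2 : Bool) (h : xor o0 (xor o1 o2) = true) :
    amp psiNXOR ![M.Z, M.Y, M.Y] ![o0, o1, o2] = 0 := by
  rcases o0 <;> rcases o1 <;> rcases o2 <;> simp at h <;>
  · simp only [amp, inner', sum_pi3, tensor, Fin.prod_univ_three]
    norm_num [mvec, yvec, evec, psiNXOR, Matrix.cons_val_zero, Matrix.cons_val_one,
      Matrix.head_cons, Matrix.cons_val_two, Matrix.tail_cons]
    try ring_nf
    try simp [Complex.I_sq]
    try ring

lemma ampZZZ (o0 o1 o2 : Bool) (h : xor o0 (xor o1 o2) = false) :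
    amp psiNXOR ![M.Z, M.Z, M.Z] ![o0, o1, o2] = 0 := by
  rcases o0 <;> rcases o1 <;> rcases o2 <;> simp at h <;>
  · simp only [amp, inner', sum_pi3, tensor, Fin.prod_univ_three]
    norm_num [mvec, yvec, evec, psiNXOR, Matrix.cons_val_zero, Matrix.cons_val_one,
      Matrix.head_cons, Matrix.cons_val_two, Matrix.tail_cons]
    try ring_nf
    try simp [Complex.I_sq]
    try ring

lemma outcome_eq (g : Fin 3 → M → Bool) (c : Fin 3 → M) :
    (fun i => g i (c i)) = ![g 0 (c 0), g 1 (c 1), g 2 (c 2)] := by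
  funext i; fin_cases i <;> rfl

/-- The NXOR state is strongly contextual for `Y`/`Z` measurements: no global
assignment induces a possible outcome in every context. -/
theorem nxor_strongly_contextual :
    ¬ ∃ g : Fin 3 → M → Bool, consistent psiNXOR g := by
  rintro ⟨g, h⟩
  have h1 := h ![M.Y, M.Y, M.Z]
  have h2 := h ![M.Y, M.Z, M.Y]
  have h3 := h ![M.Z, M.Y, M.Y]
  have h4 := h ![M.Z, M.Z, M.Z]
  rw [outcome_eq] at h1 h2 h3 h4
  simp only [Matrix.cons_val_zero, Matrix.cons_val_one, Matrix.head_cons,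
    Matrix.cons_val_two, Matrix.tail_cons] at h1 h2 h3 h4
  have e1 : xor (g 0 M.Y) (xor (g 1 M.Y) (g 2 M.Z)) = false := by
    by_contra hb
    exact h1 (ampYYZ _ _ _ (Bool.of_not_eq_false hb))
  have e2 : xor (g 0 M.Y) (xor (g 1 M.Z) (g 2 M.Y)) = false := by
    by_contra hb
    exact h2 (ampYZY _ _ _ (Bool.of_not_eq_false hb))
  have e3 : xor (g 0 M.Z) (xor (g 1 M.Y) (g 2 M.Y)) = false := by
    by_contra hb
    exact h3 (ampZYY _ _ _ (Bool.of_not_eq_false hb))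
  have e4 : xor (g 0 M.Z) (xor (g 1 M.Z) (g 2 M.Z)) = true := by
    by_contra hb
    exact h4 (ampZZZ _ _ _ (Bool.of_not_eq_true hb))
  revert e1 e2 e3 e4
  rcases g 0 M.Y <;> rcases g 1 M.Y <;> rcases g 2 M.Y <;>
    rcases g 0 M.Z <;> rcases g 1 M.Z <;> rcases g 2 M.Z <;> decide
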